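/- For every simple directed graph G with n > 0 vertices, ¬α_G is a classical tautology if and only if ¬α_G is an intuitionistic theorem (provable in the intuitionistic natural deduction calculus NJ); consequently, G has no Hamiltonian path if and only if ¬α_G is intuitionistically provable. -/

import Mathlib

/-- Propositional formulas over variables `ν`, with `⊥`, `∧`, `∨`, `→`. -/
inductive PF (ν : Type) : Type
  | bot
  | var (x : ν)
  | and (a b : PF ν)
  | or (a b : PF ν)
  | imp (a b : PF ν)
deriving DecidableEq

namespace PF

/-- `¬γ` abbreviates `γ → ⊥`. -/
def neg {ν : Type} (a : PF ν) : PF ν := .imp a .bot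

/-- Classical (Boolean) evaluation, with `⊥` interpreted as false. -/
def evalB {ν : Type} (w : ν → Bool) : PF ν → Bool
  | .bot => false
  | .var x => w x
  | .and a b => a.evalB w && b.evalB w
  | .or a b => a.evalB w || b.evalB w
  | .imp a b => !(a.evalB w) || b.evalB w

end PF

/-- Classical satisfiability. -/
def PFSatisfiable {ν : Type} (a : PF ν) : Prop := ∃ w : ν → Bool, a.evalB w = true

/-- Classical tautologyhood. -/
def PFTautology {ν : Type} (a : PF ν) : Prop := ∀ w : ν → Bool, a.evalB w = true

/-- Conjunction of a list of formulas (the empty conjunction is the truth `⊥ → ⊥`). -/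
def conjList {ν : Type} : List (PF ν) → PF ν
  | [] => .imp .bot .bot
  | [a] => a
  | a :: b :: as => .and a (conjList (b :: as))

/-- Disjunction of a list of formulas (the empty disjunction is `⊥`). -/
def disjList {ν : Type} : List (PF ν) → PF ν
  | [] => .bot
  | [a] => a
  | a :: b :: as => .or a (disjList (b :: as))

/-- The propositional variable `X_{i,v}` : vertex `v` is visited at step `i`. -/
def X {n : ℕ} (i v : Fin n) : PF (Fin n × Fin n) := .var (i, v)

/-- `A` : every vertex is visited. -/
def formA (n : ℕ) : PF (Fin n × Fin n) :=
  conjList ((List.finRange n).map fun v =>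
    disjList ((List.finRange n).map fun i => X i v))

/-- `B` : there are no repetitions. -/
def formB (n : ℕ) : PF (Fin n × Fin n) :=
  conjList ((List.finRange n).map fun v =>
    conjList ((List.finRange n).map fun i =>
      conjList (((List.finRange n).filter fun j => j ≠ i).map fun j =>
        .imp (X i v) (.imp (X j v) .bot))))

/-- `C` : at each step at least one vertex is visited. -/
def formC (n : ℕ) : PF (Fin n × Fin n) :=
  conjList ((List.finRange n).map fun i =>
    disjList ((List.finRange n).map fun v => X i v))

/-- `D` : at each step at most one vertex is visited. -/
def formD (n : ℕ) : PF (Fin n × Fin n) :=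
  conjList ((List.finRange n).map fun v =>
    conjList (((List.finRange n).filter fun w => w ≠ v).map fun w =>
      conjList ((List.finRange n).map fun i =>
        .imp (X i v) (.imp (X i w) .bot))))

/-- `E` : if there is no edge from `v` to `w` then `w` is not visited immediately
after `v`. -/
def formE (n : ℕ) (adj : Fin n → Fin n → Bool) : PF (Fin n × Fin n) :=
  conjList ((List.finRange n).map fun v =>
    conjList (((List.finRange n).filter fun w => ¬ adj v w).map fun w =>
      conjList ((List.finRange (n - 1)).map fun i =>
        .imp (X ⟨i.val, by have := i.isLt; omega⟩ v)
          (.imp (X ⟨i.val + 1, by have := i.isLt; omega⟩ w) .bot))))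

/-- The formula `α_G = A ∧ B ∧ C ∧ D ∧ E` associated with the simple directed graph
`G` on `Fin n` with adjacency `adj`. -/
def alphaG (n : ℕ) (adj : Fin n → Fin n → Bool) : PF (Fin n × Fin n) :=
  .and (formA n) (.and (formB n) (.and (formC n) (.and (formD n) (formE n adj))))

/-- `G` has a Hamiltonian path: a sequence `v₁ … v_n` of vertices such that
`i ↦ vᵢ` is a bijection onto the vertex set and consecutive vertices are adjacent. -/
def HamPath (n : ℕ) (adj : Fin n → Fin n → Bool) : Prop :=
  ∃ v : Fin n → Fin n, Function.Bijective v ∧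
    ∀ (i : ℕ) (h : i + 1 < n), adj (v ⟨i, by omega⟩) (v ⟨i + 1, h⟩) = true

/-- Provability in Prawitz's intuitionistic propositional natural deduction
calculus NJ, from a list of open assumptions. -/
inductive NJ {ν : Type} : List (PF ν) → PF ν → Prop
  | ax {Γ : List (PF ν)} {φ : PF ν} : φ ∈ Γ → NJ Γ φ
  | andI {Γ : List (PF ν)} {a b : PF ν} : NJ Γ a → NJ Γ b → NJ Γ (.and a b)
  | andE1 {Γ : List (PF ν)} {a b : PF ν} : NJ Γ (.and a b) → NJ Γ a
  | andE2 {Γ : List (PF ν)} {a b : PF ν} : NJ Γ (.and a b) → NJ Γ b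
  | orI1 {Γ : List (PF ν)} {a b : PF ν} : NJ Γ a → NJ Γ (.or a b)
  | orI2 {Γ : List (PF ν)} {a b : PF ν} : NJ Γ b → NJ Γ (.or a b)
  | orE {Γ : List (PF ν)} {a b c : PF ν} :
      NJ Γ (.or a b) → NJ (a :: Γ) c → NJ (b :: Γ) c → NJ Γ c
  | impI {Γ : List (PF ν)} {a b : PF ν} : NJ (a :: Γ) b → NJ Γ (.imp a b)
  | impE {Γ : List (PF ν)} {a b : PF ν} : NJ Γ a → NJ Γ (.imp a b) → NJ Γ b
  | botE {Γ : List (PF ν)} {φ : PF ν} : NJ Γ .bot → NJ Γ φ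


theorem evalB_conjList {ν} (w : ν → Bool) :
    ∀ l : List (PF ν), (conjList l).evalB w = l.all (fun a => a.evalB w)
  | [] => by simp [conjList, PF.evalB]
  | [a] => by simp [conjList]
  | a :: b :: as => by
      simp [conjList, PF.evalB, evalB_conjList w (b :: as)]

theorem evalB_disjList {ν} (w : ν → Bool) :
    ∀ l : List (PF ν), (disjList l).evalB w = l.any (fun a => a.evalB w)
  | [] => by simp [disjList, PF.evalB]
  | [a] => by simp [disjList]
  | a :: b :: as => by
      simp [disjList, PF.evalB, evalB_disjList w (b :: as)]

theorem NJ.weaken {ν} {Γ Γ' : List (PF ν)} {φ : PF ν} (h : NJ Γ φ)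
    (hs : ∀ ψ ∈ Γ, ψ ∈ Γ') : NJ Γ' φ := by
  induction h generalizing Γ' with
  | ax hm => exact NJ.ax (hs _ hm)
  | andI _ _ ih1 ih2 => exact NJ.andI (ih1 hs) (ih2 hs)
  | andE1 _ ih => exact NJ.andE1 (ih hs)
  | andE2 _ ih => exact NJ.andE2 (ih hs)
  | orI1 _ ih => exact NJ.orI1 (ih hs)
  | orI2 _ ih => exact NJ.orI2 (ih hs)
  | orE _ _ _ ih ih1 ih2 =>
      refine NJ.orE (ih hs) (ih1 ?_) (ih2 ?_) <;>
        · intro ψ hψ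
          rcases List.mem_cons.mp hψ with h | h
          · exact h ▸ List.mem_cons_self
          · exact List.mem_cons_of_mem _ (hs _ h)
  | impI _ ih =>
      refine NJ.impI (ih ?_)
      intro ψ hψ
      rcases List.mem_cons.mp hψ with h | h
      · exact h ▸ List.mem_cons_self
      · exact List.mem_cons_of_mem _ (hs _ h)
  | impE _ _ ih1 ih2 => exact NJ.impE (ih1 hs) (ih2 hs)
  | botE _ ih => exact NJ.botE (ih hs)

theorem NJ_conjList_mem {ν} {Γ : List (PF ν)} :
    ∀ {l : List (PF ν)}, NJ Γ (conjList l) → ∀ {a : PF ν}, a ∈ l → NJ Γ a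
  | [], _, _, ha => absurd ha List.not_mem_nil
  | [b], h, a, ha => by
      rcases List.mem_singleton.mp ha with rfl
      exact h
  | b :: c :: cs, h, a, ha => by
      rcases List.mem_cons.mp ha with rfl | ha
      · exact NJ.andE1 h
      · exact NJ_conjList_mem (NJ.andE2 h) ha

theorem NJ_disjList_elim {ν} {Γ : List (PF ν)} {c : PF ν} :
    ∀ {l : List (PF ν)}, NJ Γ (disjList l) → (∀ a ∈ l, NJ (a :: Γ) c) → NJ Γ c
  | [], h, _ => NJ.botE h
  | [b], h, hc => by
      have := hc b (List.mem_singleton.mpr rfl)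
      exact NJ.impE h (NJ.impI this)
  | b :: d :: ds, h, hc => by
      refine NJ.orE h (hc b (List.mem_cons_self)) ?_
      refine NJ_disjList_elim (NJ.ax (List.mem_cons_self)) ?_
      intro a ha
      refine (hc a (List.mem_cons_of_mem _ ha)).weaken ?_
      intro ψ hψ
      rcases List.mem_cons.mp hψ with rfl | h2
      · exact List.mem_cons_self
      · exact List.mem_cons_of_mem _ (List.mem_cons_of_mem _ h2)

theorem NJ_sound {ν} {Γ : List (PF ν)} {φ : PF ν} (h : NJ Γ φ) (w : ν → Bool)
    (hΓ : ∀ ψ ∈ Γ, ψ.evalB w = true) : φ.evalB w = true := by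
  induction h generalizing w with
  | ax hm => exact hΓ _ hm
  | andI _ _ ih1 ih2 => simp [PF.evalB, ih1 w hΓ, ih2 w hΓ]
  | andE1 _ ih => have := ih w hΓ; simp [PF.evalB] at this; exact this.1
  | andE2 _ ih => have := ih w hΓ; simp [PF.evalB] at this; exact this.2
  | orI1 _ ih => simp [PF.evalB, ih w hΓ]
  | orI2 _ ih => simp [PF.evalB, ih w hΓ]
  | orE _ _ _ ih ih1 ih2 =>
      have := ih w hΓ; simp [PF.evalB] at this
      rcases this with h1 | h1
      · refine ih1 w ?_; intro ψ hψ
        rcases List.mem_cons.mp hψ with rfl | h2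
        exacts [h1, hΓ _ h2]
      · refine ih2 w ?_; intro ψ hψ
        rcases List.mem_cons.mp hψ with rfl | h2
        exacts [h1, hΓ _ h2]
  | @impI _ a b _ ih =>
      simp [PF.evalB]
      cases ha : a.evalB w with
      | false => simp
      | true =>
          simp
          refine ih w ?_; intro ψ hψ
          rcases List.mem_cons.mp hψ with rfl | h2
          exacts [ha, hΓ _ h2]
  | impE _ _ ih1 ih2 =>
      have h1 := ih1 w hΓ; have h2 := ih2 w hΓ
      simp [PF.evalB, h1] at h2; exact h2
  | botE _ ih => have := ih w hΓ; simp [PF.evalB] at this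


theorem NJ_B_clause {n : ℕ} {Γ : List (PF (Fin n × Fin n))} (h : NJ Γ (formB n))
    (v i j : Fin n) (hji : j ≠ i) : NJ Γ (.imp (X i v) (.imp (X j v) .bot)) := by
  unfold formB at h
  have h1 := NJ_conjList_mem h (List.mem_map.mpr ⟨v, List.mem_finRange v, rfl⟩)
  have h2 := NJ_conjList_mem h1 (List.mem_map.mpr ⟨i, List.mem_finRange i, rfl⟩)
  exact NJ_conjList_mem h2 (List.mem_map.mpr
    ⟨j, List.mem_filter.mpr ⟨List.mem_finRange j, by simp [hji]⟩, rfl⟩)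

theorem NJ_E_clause {n : ℕ} {adj : Fin n → Fin n → Bool} {Γ : List (PF (Fin n × Fin n))}
    (h : NJ Γ (formE n adj)) {v w : Fin n} (hvw : adj v w = false) (i : Fin (n - 1))
    (h1 : (i : ℕ) < n) (h2 : (i : ℕ) + 1 < n) :
    NJ Γ (.imp (X ⟨i.val, h1⟩ v) (.imp (X ⟨i.val + 1, h2⟩ w) .bot)) := by
  unfold formE at h
  have ha := NJ_conjList_mem h (List.mem_map.mpr ⟨v, List.mem_finRange v, rfl⟩)
  have hb := NJ_conjList_mem ha (List.mem_map.mpr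
    ⟨w, List.mem_filter.mpr ⟨List.mem_finRange w, by simp [hvw]⟩, rfl⟩)
  exact NJ_conjList_mem hb (List.mem_map.mpr ⟨i, List.mem_finRange i, rfl⟩)

theorem NJ_C_disj {n : ℕ} {Γ : List (PF (Fin n × Fin n))} (h : NJ Γ (formC n))
    (i : Fin n) : NJ Γ (disjList ((List.finRange n).map fun v => X i v)) := by
  unfold formC at h
  exact NJ_conjList_mem h (List.mem_map.mpr ⟨i, List.mem_finRange i, rfl⟩)

theorem val_lt_of_mem_take {n k : ℕ} {i : Fin n} (h : i ∈ (List.finRange n).take k) :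
    (i : ℕ) < k := by
  obtain ⟨m, hm, hg⟩ := List.getElem_of_mem h
  have hml : m < k := by simp [List.length_take] at hm; omega
  have hmn : m < n := by simp [List.length_take] at hm; omega
  rw [List.getElem_take, List.getElem_finRange] at hg
  subst hg
  simpa using hml

theorem take_finRange_succ {n k : ℕ} (hkn : k < n) :
    (List.finRange n).take (k + 1) = (List.finRange n).take k ++ [(⟨k, hkn⟩ : Fin n)] := by
  rw [List.take_succ]
  congr 1
  rw [List.getElem?_eq_getElem (by simpa using hkn)]
  simp [List.getElem_finRange]

theorem leafKey {n : ℕ} {adj : Fin n → Fin n → Bool} (hnh : ¬ HamPath n adj)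
    (f : Fin n → Fin n) :
    NJ (((List.finRange n).map fun i => X i (f i)) ++ [alphaG n adj]) PF.bot := by
  set Γ := ((List.finRange n).map fun i => X i (f i)) ++ [alphaG n adj] with hΓ
  have hA : NJ Γ (alphaG n adj) := NJ.ax (by simp [hΓ])
  have hXmem : ∀ i : Fin n, X i (f i) ∈ Γ := fun i =>
    List.mem_append.mpr (Or.inl (List.mem_map.mpr ⟨i, List.mem_finRange i, rfl⟩))
  by_cases hinj : Function.Injective f
  · have hbij : Function.Bijective f := Finite.injective_iff_bijective.mp hinj
    have hne : ¬ ∀ (i : ℕ) (h : i + 1 < n), adj (f ⟨i, by omega⟩) (f ⟨i + 1, h⟩) = true :=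
      fun hall => hnh ⟨f, hbij, hall⟩
    push_neg at hne
    obtain ⟨i, hi1, hadj'⟩ := hne
    have hadj : adj (f ⟨i, by omega⟩) (f ⟨i + 1, hi1⟩) = false := by
      simpa using hadj'
    have hE : NJ Γ (formE n adj) :=
      NJ.andE2 (NJ.andE2 (NJ.andE2 (NJ.andE2 hA)))
    have hEc := NJ_E_clause hE hadj ⟨i, by omega⟩ (by omega : i < n) hi1
    exact NJ.impE (NJ.ax (hXmem ⟨i + 1, hi1⟩))
      (NJ.impE (NJ.ax (hXmem ⟨i, by omega⟩)) hEc)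
  · rw [Function.not_injective_iff] at hinj
    obtain ⟨i, j, hfij, hij⟩ := hinj
    have hB : NJ Γ (formB n) := NJ.andE1 (NJ.andE2 hA)
    have hBc := NJ_B_clause hB (f i) i j (Ne.symm hij)
    have hXj : X j (f i) ∈ Γ := by rw [hfij]; exact hXmem j
    exact NJ.impE (NJ.ax hXj) (NJ.impE (NJ.ax (hXmem i)) hBc)

theorem key {n : ℕ} {adj : Fin n → Fin n → Bool} (hnh : ¬ HamPath n adj) :
    ∀ (m k : ℕ), n ≤ k + m → k ≤ n → ∀ f : Fin n → Fin n,
    NJ ((((List.finRange n).take k).map fun i => X i (f i)) ++ [alphaG n adj]) PF.bot := by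
  intro m
  induction m with
  | zero =>
      intro k h1 h2 f
      have hk : k = n := by omega
      subst hk
      rw [List.take_of_length_le (by simp)]
      exact leafKey hnh f
  | succ m ih =>
      intro k h1 h2 f
      rcases eq_or_lt_of_le h2 with rfl | hkn
      · rw [List.take_of_length_le (by simp)]
        exact leafKey hnh f
      · set Γ := (((List.finRange n).take k).map fun i => X i (f i)) ++ [alphaG n adj]
          with hΓ
        have hA : NJ Γ (alphaG n adj) := NJ.ax (by simp [hΓ])
        have hC : NJ Γ (formC n) := NJ.andE1 (NJ.andE2 (NJ.andE2 hA))
        refine NJ_disjList_elim (NJ_C_disj hC ⟨k, hkn⟩) ?_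
        intro a ha
        obtain ⟨v, -, rfl⟩ := List.mem_map.mp ha
        set f' := Function.update f ⟨k, hkn⟩ v with hf'
        have hrec := ih (k + 1) (by omega) hkn f'
        have hmap : ((List.finRange n).take (k + 1)).map (fun i => X i (f' i)) =
            (((List.finRange n).take k).map fun i => X i (f i)) ++ [X ⟨k, hkn⟩ v] := by
          rw [take_finRange_succ hkn, List.map_append]
          congr 1
          · apply List.map_congr_left
            intro i hi
            have hik : (i : ℕ) < k := val_lt_of_mem_take hi
            have hne : i ≠ ⟨k, hkn⟩ := by
              intro h
              simp [Fin.ext_iff] at h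
              omega
            rw [hf', Function.update_of_ne hne]
          · simp [hf', Function.update_self]
        rw [hmap] at hrec
        refine hrec.weaken ?_
        intro ψ hψ
        simp only [hΓ, List.mem_append, List.mem_cons, List.mem_singleton] at hψ ⊢
        tauto

theorem NJ_neg_alphaG {n : ℕ} {adj : Fin n → Fin n → Bool} (hnh : ¬ HamPath n adj) :
    NJ [] (PF.neg (alphaG n adj)) := by
  refine NJ.impI ?_
  have := key hnh n 0 (by omega) (by omega) id
  simpa using this


theorem taut_neg_iff {ν : Type} (a : PF ν) :
    PFTautology (PF.neg a) ↔ ¬ PFSatisfiable a := by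
  unfold PFTautology PFSatisfiable PF.neg
  simp [PF.evalB]

theorem sat_iff_ham (n : ℕ) (adj : Fin n → Fin n → Bool) :
    PFSatisfiable (alphaG n adj) ↔ HamPath n adj := by
  constructor
  · rintro ⟨w, hw⟩
    simp [alphaG, formA, formB, formC, formD, formE, PF.evalB, evalB_conjList,
      evalB_disjList, X] at hw
    obtain ⟨-, hB, hC, -, hE⟩ := hw
    have hCc := fun i => (hC i).choose_spec
    set f : Fin n → Fin n := fun i => (hC i).choose with hf
    have hinj : Function.Injective f := by
      intro i j hij
      by_contra hne
      rcases (hB (f i) i j).resolve_left (fun h => hne h.symm) with h | h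
      · rw [hCc i] at h; simp at h
      · rw [hij, hCc j] at h; simp at h
    refine ⟨f, Finite.injective_iff_bijective.mp hinj, ?_⟩
    intro i hi1
    by_contra hne
    have hfalse : adj (f ⟨i, by omega⟩) (f ⟨i + 1, hi1⟩) = false := by
      simpa using hne
    have hlt : i < n - 1 := by omega
    rcases (hE (f ⟨i, by omega⟩) (f ⟨i + 1, hi1⟩)).resolve_left (by simp [hfalse]) ⟨i, hlt⟩ with h | h
    · rw [hCc ⟨i, by omega⟩] at h; simp at h
    · rw [hCc ⟨i + 1, hi1⟩] at h; simp at h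
  · rintro ⟨v, ⟨vinj, vsurj⟩, hedge⟩
    refine ⟨fun p => decide (v p.1 = p.2), ?_⟩
    simp [alphaG, formA, formB, formC, formD, formE, PF.evalB, evalB_conjList,
      evalB_disjList, X]
    refine ⟨fun a => vsurj a, fun a i j => or_iff_not_imp_left.mpr fun hji => ?_, fun a b => or_iff_not_imp_left.mpr fun hba i => ?_,
      fun a b => or_iff_not_imp_left.mpr fun hab i => ?_⟩
    · by_contra hcon
      push_neg at hcon
      exact hji (vinj (hcon.2.trans hcon.1.symm))
    · by_contra hcon
      push_neg at hcon
      exact hba (hcon.2.symm.trans hcon.1)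
    · by_contra hcon
      push_neg at hcon
      obtain ⟨h1, h2⟩ := hcon
      have := hedge i.val (by have := i.isLt; omega)
      rw [h1, h2] at this
      rw [this] at hab
      simp at hab

/-- For every simple directed graph `G` with `n > 0` vertices, `¬α_G` is a classical
tautology if and only if `¬α_G` is an intuitionistic theorem (provable in NJ);
consequently, `G` has no Hamiltonian path if and only if `¬α_G` is intuitionistically
provable. -/
theorem negAlphaG_classical_iff_intuitionistic (n : ℕ) (hn : 0 < n)
    (adj : Fin n → Fin n → Bool) :
    (PFTautology (PF.neg (alphaG n adj)) ↔ NJ [] (PF.neg (alphaG n adj))) ∧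
    (¬ HamPath n adj ↔ NJ [] (PF.neg (alphaG n adj))) :=
  ⟨⟨fun t => NJ_neg_alphaG (fun hh => (taut_neg_iff _).mp t ((sat_iff_ham n adj).mpr hh)),
    fun hnj w => NJ_sound hnj w (by simp)⟩,
   ⟨NJ_neg_alphaG,
    fun hnj hh => (taut_neg_iff _).mp (fun w => NJ_sound hnj w (by simp))
      ((sat_iff_ham n adj).mpr hh)⟩⟩
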